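/- Let q ∈ ℂ with q ≠ 0, and let N ≥ 3. The XXZ Temperley–Lieb densities e_i (1 ≤ i ≤ N−1) satisfy: (i) e_i² = (q + q^{−1}) e_i; (ii) e_i e_{i+1} e_i = e_i and e_{i+1} e_i e_{i+1} = e_{i+1} for 1 ≤ i ≤ N−2; (iii) e_i e_j = e_j e_i for |i−j| > 1; (iv) H(q) = −Σ_{i=1}^{N−1} e_i + (N−1)((q+q^{−1})/4)·Id; and (v) each e_i commutes with E_N, F_N and K_N. -/

import Mathlib

open Matrix Complex BigOperators Finset

noncomputable section

namespace LatticeW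

/-- basis states of the chain of `N` spin-1/2 sites -/
abbrev St (N : ℕ) := Fin N → Fin 2
/-- operators on `ℂ^{2^N}` -/
abbrev Op (N : ℕ) := Matrix (St N) (St N) ℂ

def σx : Matrix (Fin 2) (Fin 2) ℂ := !![0, 1; 1, 0]
def σy : Matrix (Fin 2) (Fin 2) ℂ := !![0, -Complex.I; Complex.I, 0]
def σz : Matrix (Fin 2) (Fin 2) ℂ := !![1, 0; 0, -1]
def σp : Matrix (Fin 2) (Fin 2) ℂ := (1/2 : ℂ) • (σx + Complex.I • σy)
def σm : Matrix (Fin 2) (Fin 2) ℂ := (1/2 : ℂ) • (σx - Complex.I • σy)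

/-- the operator acting as `M` on the (0-indexed) site `j` and as the identity
elsewhere; junk value `0` if `j` is out of range. -/
def site (N : ℕ) (j : ℕ) (M : Matrix (Fin 2) (Fin 2) ℂ) : Op N :=
  if h : j < N then
    (fun v w => if ∀ l, l ≠ (⟨j, h⟩ : Fin N) → v l = w l then M (v ⟨j, h⟩) (w ⟨j, h⟩) else 0)
  else 0

/-- diagonal value of σ^z on a one-site basis state -/
def zval (t : Fin 2) : ℂ := if t = 0 then 1 else -1

/-- Jordan–Wigner creation operator `c_j†` (0-indexed `j`; paper index `j+1`):
`c_j† = i^{j} (∏_{l<j} i σ^z_l) σ^+_j`. -/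
def ad (N : ℕ) (j : ℕ) : Op N :=
  Complex.I ^ j •
    (Matrix.diagonal (fun v : St N =>
        ∏ l ∈ Finset.univ.filter (fun l : Fin N => (l : ℕ) < j), (Complex.I * zval (v l)))
      * site N j σp)

/-- Jordan–Wigner annihilation operator `c_j` (0-indexed `j`):
`c_j = i^{-j} (∏_{l<j} (i σ^z_l)⁻¹) σ^-_j`. -/
def an (N : ℕ) (j : ℕ) : Op N :=
  (Complex.I ^ j)⁻¹ •
    (Matrix.diagonal (fun v : St N =>
        ∏ l ∈ Finset.univ.filter (fun l : Fin N => (l : ℕ) < j), (Complex.I * zval (v l))⁻¹)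
      * site N j σm)

/-- Temperley–Lieb density `e_{j+1}` of the paper (0-indexed `j`). -/
def eTL (N : ℕ) (j : ℕ) : Op N :=
  an N j * ad N (j+1) + an N (j+1) * ad N j
    + Complex.I • (ad N j * an N j - ad N (j+1) * an N (j+1))

/-- the XX Hamiltonian `H = -∑ e_j`. -/
def Hop (N : ℕ) : Op N := -∑ j ∈ Finset.range (N - 1), eTL N j

/-- `ρ(K) = ⊗_j (i σ^z)`. -/
def Kop (N : ℕ) : Op N := Matrix.diagonal (fun v : St N => ∏ l, (Complex.I * zval (v l)))

/-- `ρ(E) = (∑_{j=1}^N i^j c_j†) ρ(K)` (paper indices). -/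
def Eop (N : ℕ) : Op N := (∑ j ∈ Finset.range N, Complex.I ^ (j+1) • ad N j) * Kop N

/-- `ρ(F) = ∑_{j=1}^N i^{j-1} c_j` (paper indices). -/
def Fop (N : ℕ) : Op N := ∑ j ∈ Finset.range N, Complex.I ^ j • an N j

/-- divided power `ρ(e) = ∑_{j1<j2} (-1)^{j1+j2} i^{1-j1-j2} c_{j1}† c_{j2}†` (paper indices). -/
def sl2e (N : ℕ) : Op N :=
  ∑ j2 ∈ Finset.range N, ∑ j1 ∈ Finset.range j2,
    ((-1 : ℂ) ^ (j1 + j2) * (Complex.I ^ (j1 + j2 + 1))⁻¹) • (ad N j1 * ad N j2)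

/-- divided power `ρ(f) = ∑_{j1<j2} i^{j1+j2-1} c_{j1} c_{j2}` (paper indices). -/
def sl2f (N : ℕ) : Op N :=
  ∑ j2 ∈ Finset.range N, ∑ j1 ∈ Finset.range j2,
    (Complex.I ^ (j1 + j2 + 1)) • (an N j1 * an N j2)

/-- `WB^+_{j+1}` of the paper (0-indexed `j`). -/
def WBp (N : ℕ) (j : ℕ) : Op N :=
  (-1 : ℂ) ^ (j+1) •
    (ad N j * ad N (j+1) + Complex.I • (ad N j * ad N (j+2)) - ad N (j+1) * ad N (j+2))

/-- `WB^0_{j+1}` of the paper (0-indexed `j`). -/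
def WB0 (N : ℕ) (j : ℕ) : Op N :=
  (-(1/2) : ℂ) •
    ((1 : Op N) + Complex.I • (ad N j * an N (j+1)) - ad N j * an N (j+2)
      + Complex.I • (ad N (j+1) * an N j) - (2 : ℂ) • (ad N (j+1) * an N (j+1))
      - Complex.I • (ad N (j+1) * an N (j+2)) - ad N (j+2) * an N j
      - Complex.I • (ad N (j+2) * an N (j+1)))

/-- `WB^-_{j+1}` of the paper (0-indexed `j`). -/
def WBm (N : ℕ) (j : ℕ) : Op N :=
  (-1 : ℂ) ^ j •
    (an N j * an N (j+1) + Complex.I • (an N j * an N (j+2)) - an N (j+1) * an N (j+2))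

/-- `WB^α_j` with `α = 0 ↦ +`, `α = 1 ↦ 0`, `α = 2 ↦ -`. -/
def WB (N : ℕ) (α : Fin 3) (j : ℕ) : Op N :=
  match α with
  | 0 => WBp N j
  | 1 => WB0 N j
  | 2 => WBm N j

/-- the Fourier amplitudes `A_k(j)` (both `k` and `j` paper-indexed). -/
def Afun (N k j : ℕ) : ℂ :=
  (1/2 : ℂ) * (1 + Complex.I * Complex.exp (-(Complex.I * (Real.pi : ℂ) * (k : ℂ) / (N : ℂ))))
      * Complex.exp (Complex.I * (Real.pi : ℂ) * (k : ℂ) * (j : ℂ) / (N : ℂ))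
  - (1/2 : ℂ) * (1 + Complex.I * Complex.exp (Complex.I * (Real.pi : ℂ) * (k : ℂ) / (N : ℂ)))
      * Complex.exp (-(Complex.I * (Real.pi : ℂ) * (k : ℂ) * (j : ℂ) / (N : ℂ)))

/-- `θ†_k = ∑_{j=1}^N A_k(j) c_j†` (paper indices). -/
def θd (N k : ℕ) : Op N := ∑ j ∈ Finset.range N, Afun N k (j+1) • ad N j

/-- `θ_k = -i ∑_{j=1}^N A_k(j) c_j` (paper indices). -/
def θa (N k : ℕ) : Op N := (-Complex.I) • ∑ j ∈ Finset.range N, Afun N k (j+1) • an N j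

/-- the normalization `sqrt(n/(N sin(πn/N)))` for `n ≠ 0`, and `1/√π` for `n = 0`. -/
def ηcoef (N : ℕ) (n : ℤ) : ℂ :=
  if n = 0 then ((Real.sqrt Real.pi)⁻¹ : ℝ)
  else ((Real.sqrt ((n : ℝ) / ((N : ℝ) * Real.sin (Real.pi * (n : ℝ) / (N : ℝ)))) : ℝ) : ℂ)

/-- `η^+_n` -/
def ηp (N : ℕ) (n : ℤ) : Op N := ηcoef N n • θd N ((N : ℤ)/2 + n).toNat

/-- `η^-_n` -/
def ηm (N : ℕ) (n : ℤ) : Op N := ηcoef N n • θa N ((N : ℤ)/2 - n).toNat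

/-- coefficient `(N/2 - j + (1-(-1)^j)/2) i^j` (paper index `j`). -/
def γcoef (N j : ℕ) : ℂ :=
  ((N : ℂ)/2 - (j : ℂ) + (1 - (-1 : ℂ)^j)/2) * Complex.I ^ j

/-- the root vector `γ^+`. -/
def γp (N : ℕ) : Op N :=
  (Complex.I * (Real.sqrt Real.pi : ℂ) / (N : ℂ)) •
    ∑ j ∈ Finset.range N, γcoef N (j+1) • ad N j

/-- the root vector `γ^-`. -/
def γm (N : ℕ) : Op N :=
  (-((Real.sqrt Real.pi : ℂ) / (N : ℂ))) •
    ∑ j ∈ Finset.range N, γcoef N (j+1) • an N j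

/-- Kronecker delta -/
def kδ (a b : ℤ) : ℂ := if a = b then 1 else 0

/-- `s(j) = sqrt(sin(πj/N)/j)` with the convention `π/N` at `j = 0`. -/
def sfun (N : ℕ) (j : ℤ) : ℂ :=
  if j = 0 then ((Real.sqrt (Real.pi / (N : ℝ)) : ℝ) : ℂ)
  else ((Real.sqrt (Real.sin (Real.pi * (j : ℝ) / (N : ℝ)) / (j : ℝ)) : ℝ) : ℂ)

/-- the index range `-N/2+1 ≤ j ≤ N/2-1`. -/
def modeRange (N : ℕ) : Finset ℤ := Finset.Icc (-(N : ℤ)/2 + 1) ((N : ℤ)/2 - 1)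

/-- the coefficient appearing in `Ĥ^r_n`. -/
def Hcoef (N : ℕ) (r : ℕ) (n j1 j2 : ℤ) : ℂ :=
  ((Real.cos (Real.pi * ((j1 - j2 : ℤ) : ℝ) / (2 * (N : ℝ))) : ℝ) : ℂ)^r *
      ((-1 : ℂ)^r * kδ (j1 + j2) n + kδ (j1 + j2) (-n))
    - ((Real.sin (Real.pi * ((j1 + j2 : ℤ) : ℝ) / (2 * (N : ℝ))) : ℝ) : ℂ)^r *
      (kδ (j1 - j2) ((N : ℤ) + n) + kδ (j1 - j2) (-(N : ℤ) - n)
        + (-1 : ℂ)^r * kδ (j1 - j2) ((N : ℤ) - n) + (-1 : ℂ)^r * kδ (j1 - j2) (-(N : ℤ) + n))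

/-- the lattice Virasoro mode `Ĥ^r_n`. -/
def Hhat (N : ℕ) (r : ℕ) (n : ℤ) : Op N :=
  ∑ j1 ∈ modeRange N, ∑ j2 ∈ modeRange N,
    (sfun N j1 * sfun N j2 * Hcoef N r n j1 j2) • (ηp N j1 * ηm N j2)

/-- the coefficient `U_{r,n}(j1,j2)`. -/
def Ucoef (N : ℕ) (r : ℕ) (n j1 j2 : ℤ) : ℂ :=
  ((Real.sin (Real.pi * ((j1 - j2 : ℤ) : ℝ) / (2 * (N : ℝ))) : ℝ) : ℂ)
      * ((Real.cos (Real.pi * ((j1 - j2 : ℤ) : ℝ) / (2 * (N : ℝ))) : ℝ) : ℂ)^r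
      * ((-1 : ℂ)^r * kδ (j1 + j2) n + kδ (j1 + j2) (-n))
    + 2 * ((Real.cos (Real.pi * ((j1 + j2 : ℤ) : ℝ) / (2 * (N : ℝ))) : ℝ) : ℂ)
      * ((Real.sin (Real.pi * ((j1 + j2 : ℤ) : ℝ) / (2 * (N : ℝ))) : ℝ) : ℂ)^r
      * (kδ (j1 - j2) (-(N : ℤ) - n) + (-1 : ℂ)^r * kδ (j1 - j2) (-(N : ℤ) + n))

/-- the lattice W-algebra mode `Ŵ^{α,r}_n` with `α = 0 ↦ +`, `α = 1 ↦ 0`, `α = 2 ↦ -`. -/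
def What (N : ℕ) (α : Fin 3) (r : ℕ) (n : ℤ) : Op N :=
  ∑ j1 ∈ modeRange N, ∑ j2 ∈ modeRange N,
    (sfun N j1 * sfun N j2 * Ucoef N r n j1 j2) •
      (match α with
        | 0 => ηp N j1 * ηp N j2
        | 1 => ηp N j1 * ηm N j2 + ηm N j1 * ηp N j2
        | 2 => ηm N j1 * ηm N j2)

/-- the all-spins-down reference state. -/
def downSt (N : ℕ) : St N → ℂ := fun v => if ∀ j, v j = 1 then 1 else 0

/-- the vacuum `|0⟩ = θ†_{N/2} θ†_{N/2+1} ⋯ θ†_{N-1} |↓…↓⟩`. -/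
def vac (N : ℕ) : St N → ℂ :=
  (((List.range (N/2)).map (fun t => θd N (N/2 + t))).prod).mulVec (downSt N)

/-- the logarithmic partner `|0̃⟩ = γ^+ θ†_{N/2+1} ⋯ θ†_{N-1} |↓…↓⟩`. -/
def vacTilde (N : ℕ) : St N → ℂ :=
  (γp N * (((List.range (N/2 - 1)).map (fun t => θd N (N/2 + 1 + t))).prod)).mulVec (downSt N)

/-- the total spin `S^z = ½ ∑_j σ^z_j`. -/
def Sz (N : ℕ) : Op N := (1/2 : ℂ) • ∑ j ∈ Finset.range N, site N j σz

/- ************ XXZ spin-chain at generic q (statement 19) ************ -/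

/-- the single-site diagonal `diag(q, q⁻¹)` evaluated on a basis state. -/
def dq (q : ℂ) : Fin 2 → ℂ := fun t => if t = 0 then q else q⁻¹

/-- the XXZ Temperley–Lieb density `e_{i+1}` of the paper (0-indexed `i`). -/
def eXXZ (N : ℕ) (q : ℂ) (i : ℕ) : Op N :=
  ((q + q⁻¹)/4) • (1 : Op N)
    - (1/2 : ℂ) • (site N i σx * site N (i+1) σx + site N i σy * site N (i+1) σy)
    - ((q + q⁻¹)/4) • (site N i σz * site N (i+1) σz)
    + ((q - q⁻¹)/4) • (site N i σz - site N (i+1) σz)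

/-- the XXZ Hamiltonian with quantum-group symmetric boundary terms. -/
def HXXZ (N : ℕ) (q : ℂ) : Op N :=
  (1/2 : ℂ) • ∑ i ∈ Finset.range (N - 1),
      (site N i σx * site N (i+1) σx + site N i σy * site N (i+1) σy
        + ((q + q⁻¹)/2) • (site N i σz * site N (i+1) σz))
    - ((q - q⁻¹)/4) • (site N 0 σz - site N (N-1) σz)

/-- `K_N = ⊗_j diag(q,q⁻¹)`. -/
def KXXZ (N : ℕ) (q : ℂ) : Op N := Matrix.diagonal (fun v : St N => ∏ l, dq q (v l))

/-- `E_N = ∑_j σ^+_j ⊗ ∏_{l>j} diag(q,q⁻¹)_l`. -/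
def EXXZ (N : ℕ) (q : ℂ) : Op N :=
  ∑ j ∈ Finset.range N,
    site N j σp *
      Matrix.diagonal (fun v : St N =>
        ∏ l ∈ Finset.univ.filter (fun l : Fin N => j < (l : ℕ)), dq q (v l))

/-- `F_N = ∑_j (∏_{l<j} diag(q⁻¹,q)_l) ⊗ σ^-_j`. -/
def FXXZ (N : ℕ) (q : ℂ) : Op N :=
  ∑ j ∈ Finset.range N,
    Matrix.diagonal (fun v : St N =>
        ∏ l ∈ Finset.univ.filter (fun l : Fin N => (l : ℕ) < j), (dq q (v l))⁻¹) *
      site N j σm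

section Proofs
/-- locality of an operator on a set of sites -/
def IsLoc {N : ℕ} (S : Finset (Fin N)) (A : Op N) : Prop :=
  (∀ v w, A v w ≠ 0 → ∀ l, l ∉ S → v l = w l) ∧
  (∀ v w v' w' : St N, (∀ l ∈ S, v l = v' l) → (∀ l ∈ S, w l = w' l) →
    (∀ l ∉ S, v l = w l) → (∀ l ∉ S, v' l = w' l) → A v w = A v' w')

theorem mul_apply_loc {N : ℕ} {S T : Finset (Fin N)} {A B : Op N}
    (hA : IsLoc S A) (hB : IsLoc T B) (hd : ∀ l : Fin N, l ∈ S → l ∉ T)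
    (v w : St N) :
    (A * B) v w = A v (fun l => if l ∈ T then v l else w l)
      * B (fun l => if l ∈ T then v l else w l) w := by
  rw [Matrix.mul_apply]
  apply Finset.sum_eq_single
  · intro u _ hu
    by_contra hne
    have h1 : A v u ≠ 0 := fun h => hne (by simp [h])
    have h2 : B u w ≠ 0 := fun h => hne (by simp [h])
    apply hu
    funext l
    by_cases hl : l ∈ T
    · exact ((hA.1 v u h1 l (fun hS => hd l hS hl)).symm).trans (if_pos hl).symm
    · exact (hB.1 u w h2 l hl).trans (if_neg hl).symm
  · intro hmem; exact absurd (Finset.mem_univ _) hmem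

theorem commute_disjoint {N : ℕ} {S T : Finset (Fin N)} {A B : Op N}
    (hA : IsLoc S A) (hB : IsLoc T B) (hd : ∀ l : Fin N, l ∈ S → l ∉ T) :
    A * B = B * A := by
  have hd' : ∀ l : Fin N, l ∈ T → l ∉ S := fun l hT hS => hd l hS hT
  funext v w
  rw [mul_apply_loc hA hB hd, mul_apply_loc hB hA hd']
  set m : St N := fun l => if l ∈ T then v l else w l with hm
  set m' : St N := fun l => if l ∈ S then v l else w l with hm'
  by_cases hvw : ∀ l : Fin N, l ∉ S → l ∉ T → v l = w l
  · have e1 : A v m = A m' w := by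
      apply hA.2
      · intro l hl; simp only [hm', if_pos hl]
      · intro l hl; simp only [hm, if_neg (hd l hl), if_pos hl]  -- m l = w l on S
      · intro l hl
        by_cases hT : l ∈ T
        · simp only [hm, if_pos hT]
        · simp only [hm, if_neg hT]; exact hvw l hl hT
      · intro l hl
        simp only [hm']
        by_cases hT : l ∈ T
        · rw [if_neg (hd' l hT)]
        · rw [if_neg hl]
    have e2 : B m w = B v m' := by
      apply hB.2
      · intro l hl; simp only [hm, if_pos hl]
      · intro l hl; simp only [hm', if_neg (hd' l hl)]
      · intro l hl
        simp only [hm]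
        by_cases hS : l ∈ S
        · rw [if_neg hl]
        · rw [if_neg hl]
      · intro l hl
        simp only [hm']
        by_cases hS : l ∈ S
        · rw [if_pos hS]
        · rw [if_neg hS]; exact hvw l hS hl
    rw [e1, e2]; exact mul_comm _ _
  · push_neg at hvw
    obtain ⟨l₀, hS₀, hT₀, hne₀⟩ := hvw
    have z1 : A v m = 0 := by
      by_contra hz
      have := hA.1 v m hz l₀ hS₀
      rw [hm] at this; simp only [if_neg hT₀] at this
      exact hne₀ this
    have z2 : B v m' = 0 := by
      by_contra hz
      have := hB.1 v m' hz l₀ hT₀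
      rw [hm'] at this; simp only [if_neg hS₀] at this
      exact hne₀ this
    rw [z1, z2, zero_mul, zero_mul]

abbrev M4 := Matrix (Fin 2 × Fin 2) (Fin 2 × Fin 2) ℂ
abbrev M8 := Matrix (Fin 2 × Fin 2 × Fin 2) (Fin 2 × Fin 2 × Fin 2) ℂ

def kron (A B : Matrix (Fin 2) (Fin 2) ℂ) : M4 := fun p r => A p.1 r.1 * B p.2 r.2

theorem kron_mul (A B C D : Matrix (Fin 2) (Fin 2) ℂ) :
    kron A B * kron C D = kron (A * C) (B * D) := by
  ext p r
  simp only [kron, Matrix.mul_apply, Fintype.sum_prod_type, Finset.sum_mul, Finset.mul_sum]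
  rw [Finset.sum_comm]
  apply Finset.sum_congr rfl; intro a _
  apply Finset.sum_congr rfl; intro b _
  ring

theorem kron_one : kron 1 1 = (1 : M4) := by
  ext p r
  simp [kron, Matrix.one_apply, Prod.ext_iff]
  split_ifs with h1 h2 h2 <;> simp_all

def loc2 (N i : ℕ) (h : i + 1 < N) (M : M4) : Op N :=
  fun v w =>
    if ∀ l : Fin N, l ≠ ⟨i, Nat.lt_of_succ_lt h⟩ → l ≠ ⟨i+1, h⟩ → v l = w l
    then M (v ⟨i, Nat.lt_of_succ_lt h⟩, v ⟨i+1, h⟩) (w ⟨i, Nat.lt_of_succ_lt h⟩, w ⟨i+1, h⟩)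
    else 0

theorem loc2_smul {N i : ℕ} (h : i + 1 < N) (c : ℂ) (M : M4) :
    c • loc2 N i h M = loc2 N i h (c • M) := by
  funext v w
  simp only [loc2, Matrix.smul_apply, smul_ite, smul_zero, Matrix.smul_apply]

theorem loc2_add {N i : ℕ} (h : i + 1 < N) (M M' : M4) :
    loc2 N i h M + loc2 N i h M' = loc2 N i h (M + M') := by
  funext v w
  simp only [loc2, Matrix.add_apply]
  split_ifs <;> simp

theorem loc2_sub {N i : ℕ} (h : i + 1 < N) (M M' : M4) :
    loc2 N i h M - loc2 N i h M' = loc2 N i h (M - M') := by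
  funext v w
  simp only [loc2, Matrix.sub_apply]
  split_ifs <;> simp

theorem loc2_one {N i : ℕ} (h : i + 1 < N) : loc2 N i h 1 = (1 : Op N) := by
  funext v w
  set i0 : Fin N := ⟨i, Nat.lt_of_succ_lt h⟩
  set i1 : Fin N := ⟨i+1, h⟩
  simp only [loc2, Matrix.one_apply, Prod.ext_iff]
  by_cases hvw : v = w
  · subst hvw; simp
  · rw [if_neg hvw]
    split_ifs with hc hp
    · exfalso; apply hvw; funext l
      by_cases h0 : l = i0
      · subst h0; exact hp.1
      by_cases h1 : l = i1
      · subst h1; exact hp.2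
      · exact hc l h0 h1
    · rfl
    · rfl

def upd2 {N : ℕ} (i : ℕ) (h : i + 1 < N) (v : St N) (p : Fin 2 × Fin 2) : St N :=
  fun l => if l = (⟨i, Nat.lt_of_succ_lt h⟩ : Fin N) then p.1
    else if l = (⟨i+1, h⟩ : Fin N) then p.2 else v l

theorem upd2_at0 {N : ℕ} {i : ℕ} (h : i + 1 < N) (v : St N) (p : Fin 2 × Fin 2) :
    upd2 i h v p ⟨i, Nat.lt_of_succ_lt h⟩ = p.1 := by simp [upd2]

theorem upd2_at1 {N : ℕ} {i : ℕ} (h : i + 1 < N) (v : St N) (p : Fin 2 × Fin 2) :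
    upd2 i h v p ⟨i+1, h⟩ = p.2 := by
  have : (⟨i+1, h⟩ : Fin N) ≠ ⟨i, Nat.lt_of_succ_lt h⟩ := by simp [Fin.ext_iff]
  simp [upd2, this]

theorem upd2_ne {N : ℕ} {i : ℕ} (h : i + 1 < N) (v : St N) (p : Fin 2 × Fin 2)
    {l : Fin N} (h0 : l ≠ ⟨i, Nat.lt_of_succ_lt h⟩) (h1 : l ≠ ⟨i+1, h⟩) :
    upd2 i h v p l = v l := by simp [upd2, h0, h1]

theorem sum_upd2 {N : ℕ} {i : ℕ} (h : i + 1 < N) (v : St N) (F : St N → ℂ)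
    (hF : ∀ u, F u ≠ 0 → ∀ l : Fin N, l ≠ ⟨i, Nat.lt_of_succ_lt h⟩ → l ≠ ⟨i+1, h⟩ → v l = u l) :
    ∑ u : St N, F u = ∑ p : Fin 2 × Fin 2, F (upd2 i h v p) := by
  set i0 : Fin N := ⟨i, Nat.lt_of_succ_lt h⟩ with hi0
  set i1 : Fin N := ⟨i+1, h⟩ with hi1
  have hginj : ∀ p ∈ Finset.univ, ∀ p' ∈ Finset.univ, upd2 i h v p = upd2 i h v p' → p = p' := by
    intro p _ p' _ hpp
    have h0 := congrFun hpp i0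
    have h1 := congrFun hpp i1
    rw [upd2_at0, upd2_at0] at h0
    rw [upd2_at1, upd2_at1] at h1
    exact Prod.ext h0 h1
  have hzero : ∀ u ∈ (Finset.univ : Finset (St N)),
      u ∉ Finset.univ.image (upd2 i h v) → F u = 0 := by
    intro u _ hu
    by_contra hz
    apply hu
    rw [Finset.mem_image]
    refine ⟨(u i0, u i1), Finset.mem_univ _, ?_⟩
    funext l
    by_cases h0 : l = i0
    · subst h0; exact upd2_at0 h v _
    by_cases h1 : l = i1
    · subst h1; exact upd2_at1 h v _
    · exact (upd2_ne h v _ h0 h1).trans (hF u hz l h0 h1)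
  exact ((Finset.sum_subset (Finset.subset_univ _) hzero).symm).trans
    (Finset.sum_image hginj)

theorem loc2_mul {N i : ℕ} (h : i + 1 < N) (M M' : M4) :
    loc2 N i h M * loc2 N i h M' = loc2 N i h (M * M') := by
  set i0 : Fin N := ⟨i, Nat.lt_of_succ_lt h⟩ with hi0
  set i1 : Fin N := ⟨i+1, h⟩ with hi1
  funext v w
  rw [Matrix.mul_apply]
  simp only [loc2]
  by_cases hc : ∀ l : Fin N, l ≠ i0 → l ≠ i1 → v l = w l
  · rw [if_pos hc, Matrix.mul_apply]
    refine (sum_upd2 h v _ ?_).trans ?_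
    · intro u hu l h0 h1
      by_contra hne
      apply hu
      have : ¬ ∀ l : Fin N, l ≠ i0 → l ≠ i1 → v l = u l := fun hl => hne (hl l h0 h1)
      rw [if_neg this, zero_mul]
    · apply Finset.sum_congr rfl
      intro p _
      have c1 : ∀ l : Fin N, l ≠ i0 → l ≠ i1 → v l = upd2 i h v p l :=
        fun l h0 h1 => (upd2_ne h v p h0 h1).symm
      have c2 : ∀ l : Fin N, l ≠ i0 → l ≠ i1 → upd2 i h v p l = w l :=
        fun l h0 h1 => (upd2_ne h v p h0 h1).trans (hc l h0 h1)
      rw [if_pos c1, if_pos c2, upd2_at0, upd2_at1]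
  · rw [if_neg hc]
    apply Finset.sum_eq_zero
    intro u _
    by_cases h1 : ∀ l : Fin N, l ≠ i0 → l ≠ i1 → v l = u l
    · by_cases h2 : ∀ l : Fin N, l ≠ i0 → l ≠ i1 → u l = w l
      · exact absurd (fun l a b => (h1 l a b).trans (h2 l a b)) hc
      · rw [if_neg h2, mul_zero]
    · rw [if_neg h1, zero_mul]

theorem site_eq {N j : ℕ} (h : j < N) (M : Matrix (Fin 2) (Fin 2) ℂ) :
    site N j M = fun v w =>
      if ∀ l, l ≠ (⟨j, h⟩ : Fin N) → v l = w l then M (v ⟨j, h⟩) (w ⟨j, h⟩) else 0 := by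
  rw [site]; exact dif_pos h

theorem site_loc2_left {N i : ℕ} (h : i + 1 < N) (M : Matrix (Fin 2) (Fin 2) ℂ) :
    site N i M = loc2 N i h (kron M 1) := by
  set i0 : Fin N := ⟨i, Nat.lt_of_succ_lt h⟩ with hi0
  set i1 : Fin N := ⟨i+1, h⟩ with hi1
  have hne : i1 ≠ i0 := by simp [hi0, hi1, Fin.ext_iff]
  rw [site_eq (Nat.lt_of_succ_lt h)]
  funext v w
  simp only [loc2, kron, Matrix.one_apply]
  by_cases hv : v i1 = w i1
  · have hiff : (∀ l, l ≠ i0 → v l = w l) ↔ (∀ l : Fin N, l ≠ i0 → l ≠ i1 → v l = w l) := by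
      constructor
      · exact fun H l h0 _ => H l h0
      · intro H l h0
        by_cases h1 : l = i1
        · subst h1; exact hv
        · exact H l h0 h1
    rw [if_pos hv]
    split_ifs with h1 h2 h2
    · simp
    · exact absurd (hiff.1 h1) h2
    · exact absurd (hiff.2 h2) h1
    · rfl
  · have hno : ¬ ∀ l, l ≠ i0 → v l = w l := fun H => hv (H i1 hne)
    rw [if_neg hno, if_neg hv]
    split_ifs with h1
    · simp
    · rfl

theorem site_loc2_right {N i : ℕ} (h : i + 1 < N) (M : Matrix (Fin 2) (Fin 2) ℂ) :
    site N (i+1) M = loc2 N i h (kron 1 M) := by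
  set i0 : Fin N := ⟨i, Nat.lt_of_succ_lt h⟩ with hi0
  set i1 : Fin N := ⟨i+1, h⟩ with hi1
  have hne : i0 ≠ i1 := by simp [hi0, hi1, Fin.ext_iff]
  rw [site_eq h]
  funext v w
  simp only [loc2, kron, Matrix.one_apply]
  by_cases hv : v i0 = w i0
  · have hiff : (∀ l, l ≠ i1 → v l = w l) ↔ (∀ l : Fin N, l ≠ i0 → l ≠ i1 → v l = w l) := by
      constructor
      · exact fun H l _ h1 => H l h1
      · intro H l h1
        by_cases h0 : l = i0
        · subst h0; exact hv
        · exact H l h0 h1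
    rw [if_pos hv]
    split_ifs with h1 h2 h2
    · simp
    · exact absurd (hiff.1 h1) h2
    · exact absurd (hiff.2 h2) h1
    · rfl
  · have hno : ¬ ∀ l, l ≠ i1 → v l = w l := fun H => hv (H i0 hne)
    rw [if_neg hno, if_neg hv]
    split_ifs with h1
    · simp
    · rfl

theorem site_mul_site {N i : ℕ} (h : i + 1 < N) (A B : Matrix (Fin 2) (Fin 2) ℂ) :
    site N i A * site N (i+1) B = loc2 N i h (kron A B) := by
  rw [site_loc2_left h, site_loc2_right h, loc2_mul, kron_mul, mul_one, one_mul]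

theorem site_diag {N j : ℕ} (h : j < N) (d : Fin 2 → ℂ) :
    site N j (Matrix.diagonal d) = Matrix.diagonal (fun v : St N => d (v ⟨j, h⟩)) := by
  rw [site_eq h]
  funext v w
  simp only [Matrix.diagonal_apply]
  by_cases hvw : v = w
  · subst hvw; simp
  · rw [if_neg hvw]
    split_ifs with h1 h2
    · exfalso
      apply hvw; funext l
      by_cases hl : l = ⟨j, h⟩
      · subst hl; exact h2
      · exact h1 l hl
    · rfl
    · rfl

theorem isLoc_loc2 {N i : ℕ} (h : i + 1 < N) (M : M4) :
    IsLoc {(⟨i, Nat.lt_of_succ_lt h⟩ : Fin N), ⟨i+1, h⟩} (loc2 N i h M) := by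
  set i0 : Fin N := ⟨i, Nat.lt_of_succ_lt h⟩
  set i1 : Fin N := ⟨i+1, h⟩
  constructor
  · intro v w hvw l hl
    simp only [Finset.mem_insert, Finset.mem_singleton, not_or] at hl
    simp only [loc2] at hvw
    by_cases hc : ∀ l : Fin N, l ≠ i0 → l ≠ i1 → v l = w l
    · exact hc l hl.1 hl.2
    · rw [if_neg hc] at hvw; exact absurd rfl hvw
  · intro v w v' w' hv hw hvw hvw'
    have m0 : i0 ∈ ({i0, i1} : Finset (Fin N)) := by simp
    have m1 : i1 ∈ ({i0, i1} : Finset (Fin N)) := by simp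
    have hc : ∀ l : Fin N, l ≠ i0 → l ≠ i1 → v l = w l := by
      intro l h0 h1
      apply hvw
      simp only [Finset.mem_insert, Finset.mem_singleton, not_or]
      exact ⟨h0, h1⟩
    have hc' : ∀ l : Fin N, l ≠ i0 → l ≠ i1 → v' l = w' l := by
      intro l h0 h1
      apply hvw'
      simp only [Finset.mem_insert, Finset.mem_singleton, not_or]
      exact ⟨h0, h1⟩
    simp only [loc2]
    rw [if_pos hc, if_pos hc', hv i0 m0, hv i1 m1, hw i0 m0, hw i1 m1]

theorem isLoc_site {N j : ℕ} (h : j < N) (M : Matrix (Fin 2) (Fin 2) ℂ) :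
    IsLoc {(⟨j, h⟩ : Fin N)} (site N j M) := by
  rw [site_eq h]
  constructor
  · intro v w hvw l hl
    beta_reduce at hvw
    simp only [Finset.mem_singleton] at hl
    by_cases hc : ∀ l, l ≠ (⟨j, h⟩ : Fin N) → v l = w l
    · exact hc l hl
    · rw [if_neg hc] at hvw; exact absurd rfl hvw
  · intro v w v' w' hv hw hvw hvw'
    beta_reduce
    have m0 : (⟨j, h⟩ : Fin N) ∈ ({⟨j, h⟩} : Finset (Fin N)) := by simp
    have hc : ∀ l, l ≠ (⟨j, h⟩ : Fin N) → v l = w l := by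
      intro l h0
      exact hvw l (by simpa using h0)
    have hc' : ∀ l, l ≠ (⟨j, h⟩ : Fin N) → v' l = w' l := by
      intro l h0
      exact hvw' l (by simpa using h0)
    simp only [if_pos hc, if_pos hc', hv _ m0, hw _ m0]

theorem isLoc_diag {N : ℕ} (S : Finset (Fin N)) (d : St N → ℂ)
    (hd : ∀ v v' : St N, (∀ l ∈ S, v l = v' l) → d v = d v') :
    IsLoc S (Matrix.diagonal d) := by
  constructor
  · intro v w hvw l _
    by_cases hc : v = w
    · rw [hc]
    · rw [Matrix.diagonal_apply_ne _ hc] at hvw; exact absurd rfl hvw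
  · intro v w v' w' hv hw hvw hvw'
    by_cases hc : v = w
    · subst hc
      have : v' = w' := by
        funext l
        by_cases hl : l ∈ S
        · rw [← hv l hl, ← hw l hl]
        · exact hvw' l hl
      subst this
      rw [Matrix.diagonal_apply_eq, Matrix.diagonal_apply_eq]
      exact hd _ _ hv
    · have : v' ≠ w' := by
        intro he
        apply hc
        funext l
        by_cases hl : l ∈ S
        · rw [hv l hl, hw l hl, he]
        · exact hvw l hl
      rw [Matrix.diagonal_apply_ne _ hc, Matrix.diagonal_apply_ne _ this]
def eM (q : ℂ) : M4 :=
  ((q + q⁻¹)/4) • 1 - (1/2 : ℂ) • (kron σx σx + kron σy σy)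
    - ((q + q⁻¹)/4) • kron σz σz + ((q - q⁻¹)/4) • (kron σz 1 - kron 1 σz)

def eMx (q : ℂ) : M4 := fun p r =>
  if p = (0,1) ∧ r = (0,1) then q
  else if p = (0,1) ∧ r = (1,0) then -1
  else if p = (1,0) ∧ r = (0,1) then -1
  else if p = (1,0) ∧ r = (1,0) then q⁻¹ else 0

theorem eM_eq (q : ℂ) : eM q = eMx q := by
  ext ⟨a, b⟩ ⟨c, d⟩
  fin_cases a <;> fin_cases b <;> fin_cases c <;> fin_cases d <;>
    simp [eM, eMx, kron, σx, σy, σz, Matrix.one_apply, Prod.ext_iff, Complex.I_mul_I] <;>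
    ring_nf <;> simp [Complex.I_sq] <;> ring

def Dq2 (q : ℂ) : Matrix (Fin 2) (Fin 2) ℂ := Matrix.diagonal (dq q)
def Dqi2 (q : ℂ) : Matrix (Fin 2) (Fin 2) ℂ := Matrix.diagonal (fun t => (dq q t)⁻¹)
def E2 (q : ℂ) : M4 := kron σp (Dq2 q) + kron 1 σp
def F2 (q : ℂ) : M4 := kron σm 1 + kron (Dqi2 q) σm
def KK2 (q : ℂ) : M4 := kron (Dq2 q) (Dq2 q)
def KKi2 (q : ℂ) : M4 := kron (Dqi2 q) (Dqi2 q)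

theorem eMx_sq (q : ℂ) (hq : q ≠ 0) : eMx q * eMx q = (q + q⁻¹) • eMx q := by
  ext ⟨a, b⟩ ⟨c, d⟩
  simp only [Matrix.mul_apply, Fintype.sum_prod_type, Fin.sum_univ_two, Matrix.smul_apply,
    smul_eq_mul]
  fin_cases a <;> fin_cases b <;> fin_cases c <;> fin_cases d <;>
    simp [eMx, Prod.ext_iff] <;> field_simp <;> ring

theorem eMx_E2 (q : ℂ) (hq : q ≠ 0) : eMx q * E2 q = E2 q * eMx q := by
  ext ⟨a, b⟩ ⟨c, d⟩
  simp only [Matrix.mul_apply, Fintype.sum_prod_type, Fin.sum_univ_two]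
  fin_cases a <;> fin_cases b <;> fin_cases c <;> fin_cases d <;>
    simp [eMx, E2, kron, σp, σx, σy, Dq2, dq, Matrix.one_apply, Matrix.diagonal_apply,
      Prod.ext_iff, Complex.I_mul_I] <;> field_simp <;> ring

theorem eMx_F2 (q : ℂ) (hq : q ≠ 0) : eMx q * F2 q = F2 q * eMx q := by
  ext ⟨a, b⟩ ⟨c, d⟩
  simp only [Matrix.mul_apply, Fintype.sum_prod_type, Fin.sum_univ_two]
  fin_cases a <;> fin_cases b <;> fin_cases c <;> fin_cases d <;>
    simp [eMx, F2, kron, σm, σx, σy, Dqi2, dq, Matrix.one_apply, Matrix.diagonal_apply,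
      Prod.ext_iff, Complex.I_mul_I] <;> field_simp <;> ring

theorem eMx_KK2 (q : ℂ) (hq : q ≠ 0) : eMx q * KK2 q = KK2 q * eMx q := by
  ext ⟨a, b⟩ ⟨c, d⟩
  simp only [Matrix.mul_apply, Fintype.sum_prod_type, Fin.sum_univ_two]
  fin_cases a <;> fin_cases b <;> fin_cases c <;> fin_cases d <;>
    simp [eMx, KK2, kron, Dq2, dq, Matrix.diagonal_apply, Prod.ext_iff] <;>
    field_simp <;> ring

theorem eMx_KKi2 (q : ℂ) (hq : q ≠ 0) : eMx q * KKi2 q = KKi2 q * eMx q := by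
  ext ⟨a, b⟩ ⟨c, d⟩
  simp only [Matrix.mul_apply, Fintype.sum_prod_type, Fin.sum_univ_two]
  fin_cases a <;> fin_cases b <;> fin_cases c <;> fin_cases d <;>
    simp [eMx, KKi2, kron, Dqi2, dq, Matrix.diagonal_apply, Prod.ext_iff] <;>
    field_simp <;> ring
def loc3 (N i : ℕ) (h : i + 2 < N) (M : M8) : Op N :=
  fun v w =>
    if ∀ l : Fin N, l ≠ ⟨i, by omega⟩ → l ≠ ⟨i+1, by omega⟩ → l ≠ ⟨i+2, h⟩ → v l = w l
    then M (v ⟨i, by omega⟩, v ⟨i+1, by omega⟩, v ⟨i+2, h⟩)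
           (w ⟨i, by omega⟩, w ⟨i+1, by omega⟩, w ⟨i+2, h⟩)
    else 0

def emb12 (M : M4) : M8 := fun p r =>
  M (p.1, p.2.1) (r.1, r.2.1) * (if p.2.2 = r.2.2 then 1 else 0)

def emb23 (M : M4) : M8 := fun p r =>
  (if p.1 = r.1 then 1 else 0) * M (p.2.1, p.2.2) (r.2.1, r.2.2)

def upd3 {N : ℕ} (i : ℕ) (h : i + 2 < N) (v : St N) (p : Fin 2 × Fin 2 × Fin 2) : St N :=
  fun l => if l = (⟨i, by omega⟩ : Fin N) then p.1
    else if l = (⟨i+1, by omega⟩ : Fin N) then p.2.1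
    else if l = (⟨i+2, h⟩ : Fin N) then p.2.2 else v l

theorem upd3_at0 {N i : ℕ} (h : i + 2 < N) (v : St N) (p : Fin 2 × Fin 2 × Fin 2) :
    upd3 i h v p ⟨i, by omega⟩ = p.1 := by simp [upd3]

theorem upd3_at1 {N i : ℕ} (h : i + 2 < N) (v : St N) (p : Fin 2 × Fin 2 × Fin 2) :
    upd3 i h v p ⟨i+1, by omega⟩ = p.2.1 := by
  have h0 : (⟨i+1, by omega⟩ : Fin N) ≠ ⟨i, by omega⟩ := by simp [Fin.ext_iff]
  simp [upd3, h0]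

theorem upd3_at2 {N i : ℕ} (h : i + 2 < N) (v : St N) (p : Fin 2 × Fin 2 × Fin 2) :
    upd3 i h v p ⟨i+2, h⟩ = p.2.2 := by
  have h0 : (⟨i+2, h⟩ : Fin N) ≠ ⟨i, by omega⟩ := by simp [Fin.ext_iff]
  have h1 : (⟨i+2, h⟩ : Fin N) ≠ ⟨i+1, by omega⟩ := by simp [Fin.ext_iff]
  simp [upd3, h0, h1]

theorem upd3_ne {N i : ℕ} (h : i + 2 < N) (v : St N) (p : Fin 2 × Fin 2 × Fin 2)
    {l : Fin N} (h0 : l ≠ ⟨i, by omega⟩) (h1 : l ≠ ⟨i+1, by omega⟩) (h2 : l ≠ ⟨i+2, h⟩) :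
    upd3 i h v p l = v l := by simp [upd3, h0, h1, h2]

theorem sum_upd3 {N i : ℕ} (h : i + 2 < N) (v : St N) (F : St N → ℂ)
    (hF : ∀ u, F u ≠ 0 → ∀ l : Fin N, l ≠ ⟨i, by omega⟩ → l ≠ ⟨i+1, by omega⟩ →
      l ≠ ⟨i+2, h⟩ → v l = u l) :
    ∑ u : St N, F u = ∑ p : Fin 2 × Fin 2 × Fin 2, F (upd3 i h v p) := by
  have hginj : ∀ p ∈ Finset.univ, ∀ p' ∈ Finset.univ,
      upd3 i h v p = upd3 i h v p' → p = p' := by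
    intro p _ p' _ hpp
    have h0 := congrFun hpp ⟨i, by omega⟩
    have h1 := congrFun hpp ⟨i+1, by omega⟩
    have h2 := congrFun hpp ⟨i+2, h⟩
    rw [upd3_at0, upd3_at0] at h0
    rw [upd3_at1, upd3_at1] at h1
    rw [upd3_at2, upd3_at2] at h2
    exact Prod.ext h0 (Prod.ext h1 h2)
  have hzero : ∀ u ∈ (Finset.univ : Finset (St N)),
      u ∉ Finset.univ.image (upd3 i h v) → F u = 0 := by
    intro u _ hu
    by_contra hz
    apply hu
    rw [Finset.mem_image]
    refine ⟨(u ⟨i, by omega⟩, u ⟨i+1, by omega⟩, u ⟨i+2, h⟩), Finset.mem_univ _, ?_⟩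
    funext l
    by_cases h0 : l = (⟨i, by omega⟩ : Fin N)
    · subst h0; exact upd3_at0 h v _
    by_cases h1 : l = (⟨i+1, by omega⟩ : Fin N)
    · subst h1; exact upd3_at1 h v _
    by_cases h2 : l = (⟨i+2, h⟩ : Fin N)
    · subst h2; exact upd3_at2 h v _
    · exact (upd3_ne h v _ h0 h1 h2).trans (hF u hz l h0 h1 h2)
  exact ((Finset.sum_subset (Finset.subset_univ _) hzero).symm).trans
    (Finset.sum_image hginj)

theorem loc3_mul {N i : ℕ} (h : i + 2 < N) (M M' : M8) :
    loc3 N i h M * loc3 N i h M' = loc3 N i h (M * M') := by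
  set i0 : Fin N := ⟨i, by omega⟩ with hi0
  set i1 : Fin N := ⟨i+1, by omega⟩ with hi1
  set i2 : Fin N := ⟨i+2, h⟩ with hi2
  funext v w
  rw [Matrix.mul_apply]
  simp only [loc3]
  by_cases hc : ∀ l : Fin N, l ≠ i0 → l ≠ i1 → l ≠ i2 → v l = w l
  · rw [if_pos hc, Matrix.mul_apply]
    refine (sum_upd3 h v _ ?_).trans ?_
    · intro u hu l h0 h1 h2
      by_contra hne
      apply hu
      have : ¬ ∀ l : Fin N, l ≠ i0 → l ≠ i1 → l ≠ i2 → v l = u l :=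
        fun hl => hne (hl l h0 h1 h2)
      rw [if_neg this, zero_mul]
    · apply Finset.sum_congr rfl
      intro p _
      have c1 : ∀ l : Fin N, l ≠ i0 → l ≠ i1 → l ≠ i2 → v l = upd3 i h v p l :=
        fun l h0 h1 h2 => (upd3_ne h v p h0 h1 h2).symm
      have c2 : ∀ l : Fin N, l ≠ i0 → l ≠ i1 → l ≠ i2 → upd3 i h v p l = w l :=
        fun l h0 h1 h2 => (upd3_ne h v p h0 h1 h2).trans (hc l h0 h1 h2)
      rw [if_pos c1, if_pos c2, upd3_at0, upd3_at1, upd3_at2]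
  · rw [if_neg hc]
    apply Finset.sum_eq_zero
    intro u _
    by_cases h1 : ∀ l : Fin N, l ≠ i0 → l ≠ i1 → l ≠ i2 → v l = u l
    · by_cases h2 : ∀ l : Fin N, l ≠ i0 → l ≠ i1 → l ≠ i2 → u l = w l
      · exact absurd (fun l a b c => (h1 l a b c).trans (h2 l a b c)) hc
      · rw [if_neg h2, mul_zero]
    · rw [if_neg h1, zero_mul]

theorem loc2_loc3_left {N i : ℕ} (h2 : i + 1 < N) (h : i + 2 < N) (M : M4) :
    loc2 N i h2 M = loc3 N i h (emb12 M) := by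
  set i0 : Fin N := ⟨i, by omega⟩ with hi0
  set i1 : Fin N := ⟨i+1, by omega⟩ with hi1
  set i2 : Fin N := ⟨i+2, h⟩ with hi2
  have hne0 : i2 ≠ i0 := by simp [hi0, hi2, Fin.ext_iff]
  have hne1 : i2 ≠ i1 := by simp [hi1, hi2, Fin.ext_iff]
  funext v w
  simp only [loc2, loc3, emb12]
  by_cases hv : v i2 = w i2
  · have hiff : (∀ l : Fin N, l ≠ i0 → l ≠ i1 → v l = w l) ↔
        (∀ l : Fin N, l ≠ i0 → l ≠ i1 → l ≠ i2 → v l = w l) := by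
      constructor
      · exact fun H l a b _ => H l a b
      · intro H l a b
        by_cases hc : l = i2
        · subst hc; exact hv
        · exact H l a b hc
    rw [if_pos hv]
    split_ifs with hA hB hB
    · simp
    · exact absurd (hiff.1 hA) hB
    · exact absurd (hiff.2 hB) hA
    · rfl
  · have hno : ¬ ∀ l : Fin N, l ≠ i0 → l ≠ i1 → v l = w l :=
      fun H => hv (H i2 hne0 hne1)
    rw [if_neg hno, if_neg hv]
    split_ifs with hA
    · simp
    · rfl

theorem loc2_loc3_right {N i : ℕ} (h2 : i + 1 + 1 < N) (h : i + 2 < N) (M : M4) :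
    loc2 N (i+1) h2 M = loc3 N i h (emb23 M) := by
  set i0 : Fin N := ⟨i, by omega⟩ with hi0
  set i1 : Fin N := ⟨i+1, by omega⟩ with hi1
  set i2 : Fin N := ⟨i+2, h⟩ with hi2
  have hne1 : i0 ≠ i1 := by simp [hi0, hi1, Fin.ext_iff]
  have hne2 : i0 ≠ i2 := by simp [hi0, hi2, Fin.ext_iff]
  funext v w
  simp only [loc2, loc3, emb23]
  have hcast1 : (⟨i+1, Nat.lt_of_succ_lt h2⟩ : Fin N) = i1 := rfl
  have hcast2 : (⟨i+1+1, h2⟩ : Fin N) = i2 := rfl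
  rw [hcast1, hcast2]
  by_cases hv : v i0 = w i0
  · have hiff : (∀ l : Fin N, l ≠ i1 → l ≠ i2 → v l = w l) ↔
        (∀ l : Fin N, l ≠ i0 → l ≠ i1 → l ≠ i2 → v l = w l) := by
      constructor
      · exact fun H l _ b c => H l b c
      · intro H l b c
        by_cases hc : l = i0
        · subst hc; exact hv
        · exact H l hc b c
    rw [if_pos hv]
    split_ifs with hA hB hB
    · simp
    · exact absurd (hiff.1 hA) hB
    · exact absurd (hiff.2 hB) hA
    · rfl
  · have hno : ¬ ∀ l : Fin N, l ≠ i1 → l ≠ i2 → v l = w l :=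
      fun H => hv (H i0 hne1 hne2)
    rw [if_neg hno, if_neg hv]
    split_ifs with hA
    · simp
    · rfl
set_option maxHeartbeats 2000000 in
theorem TL_121 (q : ℂ) (hq : q ≠ 0) :
    emb12 (eMx q) * emb23 (eMx q) * emb12 (eMx q) = emb12 (eMx q) := by
  ext ⟨a, b, c⟩ ⟨d, e, f⟩
  simp only [Matrix.mul_apply, Fintype.sum_prod_type, Fin.sum_univ_two]
  fin_cases a <;> fin_cases b <;> fin_cases c <;> fin_cases d <;> fin_cases e <;> fin_cases f <;>
    simp [emb12, emb23, eMx, Prod.ext_iff] <;> field_simp <;> ring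

set_option maxHeartbeats 2000000 in
theorem TL_212 (q : ℂ) (hq : q ≠ 0) :
    emb23 (eMx q) * emb12 (eMx q) * emb23 (eMx q) = emb23 (eMx q) := by
  ext ⟨a, b, c⟩ ⟨d, e, f⟩
  simp only [Matrix.mul_apply, Fintype.sum_prod_type, Fin.sum_univ_two]
  fin_cases a <;> fin_cases b <;> fin_cases c <;> fin_cases d <;> fin_cases e <;> fin_cases f <;>
    simp [emb12, emb23, eMx, Prod.ext_iff] <;> field_simp <;> ring


theorem eXXZ_loc2 {N i : ℕ} (h : i + 1 < N) (q : ℂ) :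
    eXXZ N q i = loc2 N i h (eM q) := by
  rw [eXXZ, site_mul_site h σx σx, site_mul_site h σy σy, site_mul_site h σz σz,
    site_loc2_left h σz, site_loc2_right h σz,
    show (1 : Op N) = loc2 N i h 1 from (loc2_one h).symm]
  simp only [loc2_smul, loc2_add, loc2_sub]
  rw [eM]

theorem part_i {N : ℕ} (q : ℂ) (hq : q ≠ 0) (i : ℕ) (h : i + 1 < N) :
    eXXZ N q i ^ 2 = (q + q⁻¹) • eXXZ N q i := by
  rw [sq, eXXZ_loc2 h, loc2_mul, loc2_smul, eM_eq, eMx_sq q hq]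

theorem part_ii_1 {N : ℕ} (q : ℂ) (hq : q ≠ 0) (i : ℕ) (h : i + 2 < N) :
    eXXZ N q i * eXXZ N q (i+1) * eXXZ N q i = eXXZ N q i := by
  have h2 : i + 1 < N := by omega
  have h2' : i + 1 + 1 < N := by omega
  rw [eXXZ_loc2 h2 q, eXXZ_loc2 h2' q, loc2_loc3_left h2 h, loc2_loc3_right h2' h,
    loc3_mul, loc3_mul, eM_eq, TL_121 q hq]

theorem part_ii_2 {N : ℕ} (q : ℂ) (hq : q ≠ 0) (i : ℕ) (h : i + 2 < N) :
    eXXZ N q (i+1) * eXXZ N q i * eXXZ N q (i+1) = eXXZ N q (i+1) := by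
  have h2 : i + 1 < N := by omega
  have h2' : i + 1 + 1 < N := by omega
  rw [eXXZ_loc2 h2 q, eXXZ_loc2 h2' q, loc2_loc3_left h2 h, loc2_loc3_right h2' h,
    loc3_mul, loc3_mul, eM_eq, TL_212 q hq]

theorem part_iii {N : ℕ} (q : ℂ) (i j : ℕ) (hij : i + 1 < j) (hj : j + 1 < N) :
    eXXZ N q i * eXXZ N q j = eXXZ N q j * eXXZ N q i := by
  have hi : i + 1 < N := by omega
  rw [eXXZ_loc2 hi q, eXXZ_loc2 hj q]
  apply commute_disjoint (isLoc_loc2 hi _) (isLoc_loc2 hj _)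
  intro l hl
  simp only [Finset.mem_insert, Finset.mem_singleton, Fin.ext_iff] at hl ⊢
  push_neg
  omega

theorem part_iv {N : ℕ} (hN : 3 ≤ N) (q : ℂ) :
    HXXZ N q = -(∑ i ∈ Finset.range (N - 1), eXXZ N q i)
      + (((N : ℂ) - 1) * ((q + q⁻¹)/4)) • (1 : Op N) := by
  rw [HXXZ]
  simp only [eXXZ, Finset.sum_add_distrib, Finset.sum_sub_distrib, ← Finset.smul_sum,
    Finset.sum_const, Finset.card_range]
  have htel : ∑ x ∈ Finset.range (N-1), site N x σz - ∑ x ∈ Finset.range (N-1), site N (x+1) σz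
      = site N 0 σz - site N (N-1) σz := by
    rw [← Finset.sum_sub_distrib, Finset.sum_range_sub' (fun k => site N k σz) (N-1)]
  rw [htel]
  rw [← Nat.cast_smul_eq_nsmul ℂ]
  have hc : ((N - 1 : ℕ) : ℂ) = (N : ℂ) - 1 := by
    push_cast [Nat.cast_sub (by omega : 1 ≤ N)]; ring
  rw [hc]
  module
theorem loc2_kron_diag {N i : ℕ} (h : i + 1 < N) (d1 d2 : Fin 2 → ℂ) :
    loc2 N i h (kron (Matrix.diagonal d1) (Matrix.diagonal d2))
      = Matrix.diagonal (fun v : St N => d1 (v ⟨i, Nat.lt_of_succ_lt h⟩) * d2 (v ⟨i+1, h⟩)) := by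
  rw [← site_mul_site h, site_diag (Nat.lt_of_succ_lt h) d1, site_diag h d2,
    Matrix.diagonal_mul_diagonal]

theorem comm_loc2 {N i : ℕ} (h : i + 1 < N) {A B : M4} (hAB : A * B = B * A) :
    Commute (loc2 N i h A) (loc2 N i h B) := by
  show _ = _
  rw [loc2_mul, loc2_mul, hAB]

theorem isLoc_e {N i : ℕ} (h : i + 1 < N) (q : ℂ) :
    IsLoc {(⟨i, Nat.lt_of_succ_lt h⟩ : Fin N), ⟨i+1, h⟩} (eXXZ N q i) := by
  rw [eXXZ_loc2 h q]; exact isLoc_loc2 h (eM q)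

theorem comm_e_site {N i : ℕ} (h : i + 1 < N) (q : ℂ) {j : ℕ} (hj : j < N)
    (hji : j ≠ i) (hji1 : j ≠ i + 1) (M : Matrix (Fin 2) (Fin 2) ℂ) :
    Commute (eXXZ N q i) (site N j M) := by
  show _ = _
  apply commute_disjoint (isLoc_e h q) (isLoc_site hj M)
  intro l hl
  simp only [Finset.mem_insert, Finset.mem_singleton, Fin.ext_iff] at hl ⊢
  omega

theorem comm_e_diag {N i : ℕ} (h : i + 1 < N) (q : ℂ) {S : Finset (Fin N)}
    (hS : ∀ l ∈ S, (l : ℕ) ≠ i ∧ (l : ℕ) ≠ i + 1) (f : Fin N → Fin 2 → ℂ) :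
    Commute (eXXZ N q i) (Matrix.diagonal (fun v : St N => ∏ l ∈ S, f l (v l))) := by
  show _ = _
  apply commute_disjoint (isLoc_e h q)
    (isLoc_diag S _ (fun v v' hvv => Finset.prod_congr rfl (fun l hl => by rw [hvv l hl])))
  intro l hl
  simp only [Finset.mem_insert, Finset.mem_singleton, Fin.ext_iff] at hl
  intro hlS
  rcases hl with h1 | h1
  · exact (hS l hlS).1 h1
  · exact (hS l hlS).2 h1

theorem comm_e_loc2 {N i : ℕ} (h : i + 1 < N) (q : ℂ) {B : M4}
    (hB : eMx q * B = B * eMx q) :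
    Commute (eXXZ N q i) (loc2 N i h B) := by
  rw [eXXZ_loc2 h q]
  exact comm_loc2 h (by rw [eM_eq, hB])

/-- the `j`-th summand of `EXXZ`. -/
def TE (N : ℕ) (q : ℂ) (j : ℕ) : Op N :=
  site N j σp *
    Matrix.diagonal (fun v : St N =>
      ∏ l ∈ Finset.univ.filter (fun l : Fin N => j < (l : ℕ)), dq q (v l))

theorem comm_e_TE_far {N i : ℕ} (h : i + 1 < N) (q : ℂ) (hq : q ≠ 0) {j : ℕ}
    (hj : j < N) (hji : j ≠ i) (hji1 : j ≠ i + 1) :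
    Commute (eXXZ N q i) (TE N q j) := by
  apply Commute.mul_right (comm_e_site h q hj hji hji1 σp)
  rcases Nat.lt_or_ge j i with hcase | hcase
  · -- j < i : split off the diagonal over sites i, i+1
    have hsub : ({(⟨i, Nat.lt_of_succ_lt h⟩ : Fin N), ⟨i+1, h⟩} : Finset (Fin N)) ⊆
        Finset.univ.filter (fun l : Fin N => j < (l : ℕ)) := by
      intro l hl
      simp only [Finset.mem_insert, Finset.mem_singleton] at hl
      simp only [Finset.mem_filter, Finset.mem_univ, true_and]
      rcases hl with rfl | rfl <;> simp <;> omega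
    have hsplit : (Matrix.diagonal (fun v : St N =>
          ∏ l ∈ Finset.univ.filter (fun l : Fin N => j < (l : ℕ)), dq q (v l)) : Op N)
        = Matrix.diagonal (fun v : St N =>
            ∏ l ∈ Finset.univ.filter (fun l : Fin N => j < (l : ℕ))
              \ {(⟨i, Nat.lt_of_succ_lt h⟩ : Fin N), ⟨i+1, h⟩}, dq q (v l))
          * Matrix.diagonal (fun v : St N =>
              dq q (v ⟨i, Nat.lt_of_succ_lt h⟩) * dq q (v ⟨i+1, h⟩)) := by
      rw [Matrix.diagonal_mul_diagonal]
      apply congrArg Matrix.diagonal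
      funext v
      rw [← Finset.prod_sdiff hsub, Finset.prod_pair (by simp [Fin.ext_iff])]
    rw [hsplit]
    apply Commute.mul_right
    · apply comm_e_diag h q _ (fun l => dq q)
      intro l hl
      simp only [Finset.mem_sdiff, Finset.mem_insert, Finset.mem_singleton, not_or,
        Fin.ext_iff] at hl
      exact ⟨hl.2.1, hl.2.2⟩
    · rw [← loc2_kron_diag h]
      apply comm_e_loc2 h q
      have := eMx_KK2 q hq
      rwa [KK2, Dq2] at this
  · -- i + 1 < j
    have hcase' : i + 1 < j := by omega
    apply comm_e_diag h q _ (fun l => dq q)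
    intro l hl
    simp only [Finset.mem_filter, Finset.mem_univ, true_and] at hl
    omega

theorem comm_e_TE_pair {N i : ℕ} (h : i + 1 < N) (q : ℂ) (hq : q ≠ 0) :
    Commute (eXXZ N q i) (TE N q i + TE N q (i+1)) := by
  have hfilter : Finset.univ.filter (fun l : Fin N => i < (l : ℕ))
      = insert (⟨i+1, h⟩ : Fin N) (Finset.univ.filter (fun l : Fin N => i + 1 < (l : ℕ))) := by
    ext l
    simp only [Finset.mem_insert, Finset.mem_filter, Finset.mem_univ, true_and, Fin.ext_iff]
    omega
  have hTi : TE N q i = loc2 N i h (kron σp (Matrix.diagonal (dq q)))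
      * Matrix.diagonal (fun v : St N =>
          ∏ l ∈ Finset.univ.filter (fun l : Fin N => i + 1 < (l : ℕ)), dq q (v l)) := by
    rw [TE, ← site_mul_site h, mul_assoc]
    congr 1
    rw [site_diag h (dq q), Matrix.diagonal_mul_diagonal]
    apply congrArg Matrix.diagonal
    funext v
    rw [hfilter, Finset.prod_insert (by simp)]
  have hTi1 : TE N q (i+1) = loc2 N i h (kron 1 σp)
      * Matrix.diagonal (fun v : St N =>
          ∏ l ∈ Finset.univ.filter (fun l : Fin N => i + 1 < (l : ℕ)), dq q (v l)) := by
    rw [TE, ← site_loc2_right h σp]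
  rw [hTi, hTi1, ← add_mul, loc2_add]
  apply Commute.mul_right
  · apply comm_e_loc2 h q
    have := eMx_E2 q hq
    rwa [E2, Dq2] at this
  · apply comm_e_diag h q _ (fun l => dq q)
    intro l hl
    simp only [Finset.mem_filter, Finset.mem_univ, true_and] at hl
    omega

theorem comm_e_E {N i : ℕ} (h : i + 1 < N) (q : ℂ) (hq : q ≠ 0) :
    eXXZ N q i * EXXZ N q = EXXZ N q * eXXZ N q i := by
  have hE : EXXZ N q = ∑ j ∈ Finset.range N, TE N q j := rfl
  have hsub : ({i, i+1} : Finset ℕ) ⊆ Finset.range N := by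
    intro x hx
    simp only [Finset.mem_insert, Finset.mem_singleton] at hx
    rcases hx with rfl | rfl <;> simp only [Finset.mem_range] <;> omega
  have hcomm : Commute (eXXZ N q i) (∑ j ∈ Finset.range N, TE N q j) := by
    rw [← Finset.sum_sdiff hsub, Finset.sum_pair (by omega : i ≠ i + 1)]
    apply Commute.add_right
    · apply Commute.sum_right
      intro j hj
      simp only [Finset.mem_sdiff, Finset.mem_range, Finset.mem_insert,
        Finset.mem_singleton, not_or] at hj
      exact comm_e_TE_far h q hq hj.1 hj.2.1 hj.2.2
    · exact comm_e_TE_pair h q hq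
  rw [hE]
  exact hcomm.eq

theorem dq_inv (q : ℂ) (t : Fin 2) : (dq q t)⁻¹ = dq q⁻¹ t := by
  unfold dq; split_ifs <;> rfl

theorem diag_dq_inv (q : ℂ) :
    (Matrix.diagonal fun t => (dq q t)⁻¹) = Matrix.diagonal (dq q⁻¹) := by
  apply congrArg; funext t; exact dq_inv q t

theorem comm_e_K {N i : ℕ} (h : i + 1 < N) (q : ℂ) (hq : q ≠ 0) :
    eXXZ N q i * KXXZ N q = KXXZ N q * eXXZ N q i := by
  have hne : (⟨i, Nat.lt_of_succ_lt h⟩ : Fin N) ≠ ⟨i+1, h⟩ := by simp [Fin.ext_iff]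
  have hsplit : KXXZ N q
      = Matrix.diagonal (fun v : St N =>
          ∏ l ∈ Finset.univ \ {(⟨i, Nat.lt_of_succ_lt h⟩ : Fin N), ⟨i+1, h⟩}, dq q (v l))
        * Matrix.diagonal (fun v : St N =>
            dq q (v ⟨i, Nat.lt_of_succ_lt h⟩) * dq q (v ⟨i+1, h⟩)) := by
    rw [KXXZ, Matrix.diagonal_mul_diagonal]
    apply congrArg Matrix.diagonal
    funext v
    rw [← Finset.prod_sdiff (Finset.subset_univ
      ({(⟨i, Nat.lt_of_succ_lt h⟩ : Fin N), ⟨i+1, h⟩} : Finset (Fin N)))]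
    rw [Finset.prod_pair hne]
  rw [hsplit]
  refine (Commute.mul_right ?_ ?_).eq
  · apply comm_e_diag h q _ (fun l => dq q)
    intro l hl
    simp only [Finset.mem_sdiff, Finset.mem_univ, true_and, Finset.mem_insert,
      Finset.mem_singleton, not_or, Fin.ext_iff] at hl
    exact hl
  · rw [← loc2_kron_diag h]
    apply comm_e_loc2 h q
    have := eMx_KK2 q hq
    rwa [KK2, Dq2] at this

/-- the `j`-th summand of `FXXZ`, with the inverted diagonal expressed via `dq q⁻¹`. -/
def TF (N : ℕ) (q : ℂ) (j : ℕ) : Op N :=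
  Matrix.diagonal (fun v : St N =>
      ∏ l ∈ Finset.univ.filter (fun l : Fin N => (l : ℕ) < j), dq q⁻¹ (v l)) *
    site N j σm

theorem FXXZ_eq_sum_TF (N : ℕ) (q : ℂ) : FXXZ N q = ∑ j ∈ Finset.range N, TF N q j := by
  rw [FXXZ]
  apply Finset.sum_congr rfl
  intro j _
  rw [TF]
  congr 1
  apply congrArg Matrix.diagonal
  funext v
  exact Finset.prod_congr rfl (fun l _ => dq_inv q (v l))

theorem comm_e_TF_far {N i : ℕ} (h : i + 1 < N) (q : ℂ) (hq : q ≠ 0) {j : ℕ}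
    (hj : j < N) (hji : j ≠ i) (hji1 : j ≠ i + 1) :
    Commute (eXXZ N q i) (TF N q j) := by
  refine Commute.mul_right ?_ (comm_e_site h q hj hji hji1 σm)
  rcases Nat.lt_or_ge j i with hcase | hcase
  · -- j < i : the diagonal tail is over sites < j, disjoint from {i, i+1}
    apply comm_e_diag h q _ (fun l => dq q⁻¹)
    intro l hl
    simp only [Finset.mem_filter, Finset.mem_univ, true_and] at hl
    omega
  · -- i + 1 < j
    have hcase' : i + 1 < j := by omega
    have hsub : ({(⟨i, Nat.lt_of_succ_lt h⟩ : Fin N), ⟨i+1, h⟩} : Finset (Fin N)) ⊆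
        Finset.univ.filter (fun l : Fin N => (l : ℕ) < j) := by
      intro l hl
      simp only [Finset.mem_insert, Finset.mem_singleton] at hl
      simp only [Finset.mem_filter, Finset.mem_univ, true_and]
      rcases hl with rfl | rfl <;> simp <;> omega
    have hsplit : (Matrix.diagonal (fun v : St N =>
          ∏ l ∈ Finset.univ.filter (fun l : Fin N => (l : ℕ) < j), dq q⁻¹ (v l)) : Op N)
        = Matrix.diagonal (fun v : St N =>
            ∏ l ∈ Finset.univ.filter (fun l : Fin N => (l : ℕ) < j)
              \ {(⟨i, Nat.lt_of_succ_lt h⟩ : Fin N), ⟨i+1, h⟩}, dq q⁻¹ (v l))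
          * Matrix.diagonal (fun v : St N =>
              dq q⁻¹ (v ⟨i, Nat.lt_of_succ_lt h⟩) * dq q⁻¹ (v ⟨i+1, h⟩)) := by
      rw [Matrix.diagonal_mul_diagonal]
      apply congrArg Matrix.diagonal
      funext v
      rw [← Finset.prod_sdiff hsub, Finset.prod_pair (by simp [Fin.ext_iff])]
    rw [hsplit]
    apply Commute.mul_right
    · apply comm_e_diag h q _ (fun l => dq q⁻¹)
      intro l hl
      simp only [Finset.mem_sdiff, Finset.mem_insert, Finset.mem_singleton, not_or,
        Fin.ext_iff] at hl
      exact ⟨hl.2.1, hl.2.2⟩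
    · rw [← loc2_kron_diag h]
      apply comm_e_loc2 h q
      have := eMx_KKi2 q hq
      rwa [KKi2, Dqi2, diag_dq_inv] at this

theorem comm_e_TF_pair {N i : ℕ} (h : i + 1 < N) (q : ℂ) (hq : q ≠ 0) :
    Commute (eXXZ N q i) (TF N q i + TF N q (i+1)) := by
  have hfilter : Finset.univ.filter (fun l : Fin N => (l : ℕ) < i + 1)
      = insert (⟨i, Nat.lt_of_succ_lt h⟩ : Fin N)
          (Finset.univ.filter (fun l : Fin N => (l : ℕ) < i)) := by
    ext l
    simp only [Finset.mem_insert, Finset.mem_filter, Finset.mem_univ, true_and, Fin.ext_iff]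
    omega
  have hTi : TF N q i
      = Matrix.diagonal (fun v : St N =>
          ∏ l ∈ Finset.univ.filter (fun l : Fin N => (l : ℕ) < i), dq q⁻¹ (v l))
        * loc2 N i h (kron σm 1) := by
    rw [TF, ← site_loc2_left h σm]
  have hTi1 : TF N q (i+1)
      = Matrix.diagonal (fun v : St N =>
          ∏ l ∈ Finset.univ.filter (fun l : Fin N => (l : ℕ) < i), dq q⁻¹ (v l))
        * loc2 N i h (kron (Matrix.diagonal (dq q⁻¹)) σm) := by
    rw [TF, ← site_mul_site h, ← mul_assoc]
    congr 1
    rw [site_diag (Nat.lt_of_succ_lt h), Matrix.diagonal_mul_diagonal]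
    apply congrArg Matrix.diagonal
    funext v
    rw [hfilter, Finset.prod_insert (by simp), mul_comm]
  have hD2 : Commute (eXXZ N q i) (Matrix.diagonal (fun v : St N =>
      ∏ l ∈ Finset.univ.filter (fun l : Fin N => (l : ℕ) < i), dq q⁻¹ (v l)) : Op N) := by
    apply comm_e_diag h q _ (fun l => dq q⁻¹)
    intro l hl
    simp only [Finset.mem_filter, Finset.mem_univ, true_and] at hl
    omega
  rw [hTi, hTi1, ← mul_add, loc2_add]
  apply Commute.mul_right hD2
  apply comm_e_loc2 h q
  have := eMx_F2 q hq
  rwa [F2, Dqi2, diag_dq_inv] at this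

theorem comm_e_F {N i : ℕ} (h : i + 1 < N) (q : ℂ) (hq : q ≠ 0) :
    eXXZ N q i * FXXZ N q = FXXZ N q * eXXZ N q i := by
  have hsub : ({i, i+1} : Finset ℕ) ⊆ Finset.range N := by
    intro x hx
    simp only [Finset.mem_insert, Finset.mem_singleton] at hx
    rcases hx with rfl | rfl <;> simp only [Finset.mem_range] <;> omega
  have hcomm : Commute (eXXZ N q i) (∑ j ∈ Finset.range N, TF N q j) := by
    rw [← Finset.sum_sdiff hsub, Finset.sum_pair (by omega : i ≠ i + 1)]
    apply Commute.add_right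
    · apply Commute.sum_right
      intro j hj
      simp only [Finset.mem_sdiff, Finset.mem_range, Finset.mem_insert,
        Finset.mem_singleton, not_or] at hj
      exact comm_e_TF_far h q hq hj.1 hj.2.1 hj.2.2
    · exact comm_e_TF_pair h q hq
  rw [FXXZ_eq_sum_TF]
  exact hcomm.eq

end Proofs
end LatticeW
/-- XXZ Temperley–Lieb densities: TL relations, relation to the Hamiltonian,
and quantum-group symmetry. -/
theorem LatticeW.xxz_TL (N : ℕ) (hN : 3 ≤ N) (q : ℂ) (hq : q ≠ 0) :
    (∀ i, i < N - 1 → eXXZ N q i ^ 2 = (q + q⁻¹) • eXXZ N q i) ∧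
    (∀ i, i + 1 < N - 1 →
      eXXZ N q i * eXXZ N q (i+1) * eXXZ N q i = eXXZ N q i ∧
      eXXZ N q (i+1) * eXXZ N q i * eXXZ N q (i+1) = eXXZ N q (i+1)) ∧
    (∀ i j, i < N - 1 → j < N - 1 → 1 < Nat.dist i j →
      eXXZ N q i * eXXZ N q j = eXXZ N q j * eXXZ N q i) ∧
    (HXXZ N q
      = -(∑ i ∈ Finset.range (N - 1), eXXZ N q i)
        + (((N : ℂ) - 1) * ((q + q⁻¹)/4)) • (1 : Op N)) ∧
    (∀ i, i < N - 1 →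
      eXXZ N q i * EXXZ N q = EXXZ N q * eXXZ N q i ∧
      eXXZ N q i * FXXZ N q = FXXZ N q * eXXZ N q i ∧
      eXXZ N q i * KXXZ N q = KXXZ N q * eXXZ N q i) := by
  refine ⟨?_, ?_, ?_, ?_, ?_⟩
  · intro i hi
    exact part_i q hq i (by omega)
  · intro i hi
    exact ⟨part_ii_1 q hq i (by omega), part_ii_2 q hq i (by omega)⟩
  · intro i j hi hj hd
    have hd' : i + 1 < j ∨ j + 1 < i := by
      simp only [Nat.dist] at hd
      omega
    rcases hd' with hc | hc
    · exact part_iii q i j hc (by omega)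
    · exact (part_iii q j i hc (by omega)).symm
  · exact part_iv hN q
  · intro i hi
    exact ⟨comm_e_E (by omega) q hq, comm_e_F (by omega) q hq, comm_e_K (by omega) q hq⟩
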